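/- Let P be a monotone-constraint program and M a model of P. Then (M,M) and (Can(P^M,M),M) are SE-models of P. -/

import Mathlib

universe u

/-- A constraint `A = (X, C)`: domain `X` and a family `C` of subsets of `X`. -/
structure Constraint (α : Type u) where
  dom : Set α
  sat : Set (Set α)
  sat_sub : ∀ Y ∈ sat, Y ⊆ dom

/-- `M ⊨ A` iff `M ∩ Dom(A) ∈ C`. -/
def Constraint.Sat {α : Type u} (M : Set α) (A : Constraint α) : Prop :=
  M ∩ A.dom ∈ A.sat

/-- A constraint is monotone if its satisfying family is closed under supersets
within the domain. -/
def Constraint.Mono {α : Type u} (A : Constraint α) : Prop :=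
  ∀ W Y : Set α, W ∈ A.sat → W ⊆ Y → Y ⊆ A.dom → Y ∈ A.sat

/-- A rule `A ← A₁,…,A_k, not(A_{k+1}),…,not(A_m)`. -/
structure Rule (α : Type u) where
  head : Constraint α
  pos : Set (Constraint α)
  neg : Set (Constraint α)

/-- A constraint program is a set of rules. -/
abbrev Program (α : Type u) := Set (Rule α)

def Rule.Horn {α : Type u} (r : Rule α) : Prop := r.neg = ∅

def Rule.Mono {α : Type u} (r : Rule α) : Prop :=
  r.head.Mono ∧ (∀ A ∈ r.pos, A.Mono) ∧ (∀ A ∈ r.neg, A.Mono)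

def Program.Horn {α : Type u} (P : Program α) : Prop := ∀ r ∈ P, r.Horn

def Program.Mono {α : Type u} (P : Program α) : Prop := ∀ r ∈ P, r.Mono

/-- `M` satisfies the body of `r`. -/
def Rule.BodySat {α : Type u} (M : Set α) (r : Rule α) : Prop :=
  (∀ A ∈ r.pos, Constraint.Sat M A) ∧ (∀ A ∈ r.neg, ¬ Constraint.Sat M A)

/-- `P(M)`: the set of `M`-applicable rules of `P`. -/
def Program.app {α : Type u} (P : Program α) (M : Set α) : Program α :=
  {r ∈ P | r.BodySat M}

/-- `hset(r) = Dom(hd(r))`. -/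
def Rule.hset {α : Type u} (r : Rule α) : Set α := r.head.dom

/-- `hset(P)`: union of the headsets of rules of `P`. -/
def Program.hset {α : Type u} (P : Program α) : Set α := ⋃ r ∈ P, r.hset

def Rule.atoms {α : Type u} (r : Rule α) : Set α :=
  r.head.dom ∪ (⋃ A ∈ r.pos, A.dom) ∪ (⋃ A ∈ r.neg, A.dom)

/-- `At(P)`: atoms occurring in domains of constraints of `P`. -/
def Program.atoms {α : Type u} (P : Program α) : Set α := ⋃ r ∈ P, r.atoms

/-- `M` is a model of `P`. -/
def Program.IsModel {α : Type u} (P : Program α) (M : Set α) : Prop :=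
  ∀ r ∈ P, r.BodySat M → Constraint.Sat M r.head

/-- `M` is a supported model of `P`. -/
def Program.Supported {α : Type u} (P : Program α) (M : Set α) : Prop :=
  P.IsModel M ∧ M ⊆ (P.app M).hset

/-- The nondeterministic one-step provability operator `T_P^nd`. -/
def Program.Tnd {α : Type u} (P : Program α) (M : Set α) : Set (Set α) :=
  {M' | M' ⊆ (P.app M).hset ∧ ∀ r ∈ P.app M, Constraint.Sat M' r.head}

/-- A `P`-computation: a transfinite sequence starting at `∅`, increasing, with
each successor step nondeterministically one-step provable, continuous at limits. -/
structure PComputation {α : Type u} (P : Program α) where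
  X : Ordinal.{u} → Set α
  zero : X 0 = ∅
  incr : ∀ o, X o ⊆ X (o + 1)
  step : ∀ o, X (o + 1) ∈ P.Tnd (X o)
  limit : ∀ o : Ordinal.{u}, Order.IsSuccLimit o → X o = ⋃ β < o, X β

/-- The result `R_t` of a computation. -/
def PComputation.result {α : Type u} {P : Program α} (t : PComputation P) : Set α :=
  ⋃ o, t.X o

/-- `M` is a derivable model of `P`: the result of some `P`-computation. -/
def Program.Derivable {α : Type u} (P : Program α) (M : Set α) : Prop :=
  ∃ t : PComputation P, t.result = M

/-- The canonical sequence `t^{P,M}`: `X₀ = ∅`, `X_{β+1} = hset(P(X_β)) ∩ M`,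
unions at limits. -/
noncomputable def canSeq {α : Type u} (P : Program α) (M : Set α) (o : Ordinal.{u}) :
    Set α :=
  Ordinal.limitRecOn o ∅ (fun _ ih => (P.app ih).hset ∩ M)
    (fun o _ ih => ⋃ β : Ordinal.{u}, ⋃ h : β < o, ih β h)

/-- `Can(P,M)`: the result of the canonical computation. -/
noncomputable def Can {α : Type u} (P : Program α) (M : Set α) : Set α :=
  ⋃ o, canSeq P M o

/-- The reduct of a single rule: drop negated literals. -/
def Rule.pos_part {α : Type u} (r : Rule α) : Rule α := ⟨r.head, r.pos, ∅⟩

/-- The reduct `P^M`. -/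
def Program.reduct {α : Type u} (P : Program α) (M : Set α) : Program α :=
  {r' | ∃ r ∈ P, (∀ A ∈ r.neg, ¬ Constraint.Sat M A) ∧ r' = r.pos_part}

/-- `M` is a stable model of `P`: a derivable model of the reduct `P^M`. -/
def Program.Stable {α : Type u} (P : Program α) (M : Set α) : Prop :=
  (P.reduct M).Derivable M

/-- `N ⊨_M P`: `N` is an `M`-maximal model of the Horn program `P`. -/
def Program.MMax {α : Type u} (P : Program α) (M N : Set α) : Prop :=
  N ⊆ M ∧ P.IsModel N ∧ M ∩ (P.app N).hset ⊆ N

/-- `(X,Y)` is an SE-model of `P`. -/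
def Program.SE {α : Type u} (P : Program α) (X Y : Set α) : Prop :=
  X ⊆ Y ∧ P.IsModel Y ∧ (P.reduct Y).MMax Y X

/-- `(X,Y)` is a UE-model of `P`. -/
def Program.UE {α : Type u} (P : Program α) (X Y : Set α) : Prop :=
  P.SE X Y ∧ ∀ X', P.SE X' Y → X ⊆ X' → X = X' ∨ X' = Y

/-- Strong equivalence of monotone-constraint programs. -/
def StrongEq {α : Type u} (P Q : Program α) : Prop :=
  ∀ R : Program α, R.Mono → ∀ M : Set α, (P ∪ R).Stable M ↔ (Q ∪ R).Stable M

/-- The rule `(D,{D}) ←`. -/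
def factRule {α : Type u} (D : Set α) : Rule α :=
  ⟨⟨D, {D}, fun Y hY => by simp only [Set.mem_singleton_iff] at hY; simp [hY]⟩, ∅, ∅⟩

/-- Uniform equivalence of monotone-constraint programs. -/
def UnifEq {α : Type u} (P Q : Program α) : Prop :=
  ∀ D : Set α, ∀ M : Set α,
    (P ∪ {factRule D}).Stable M ↔ (Q ∪ {factRule D}).Stable M

/-- `P` is tight on `M`. -/
def Program.Tight {α : Type u} (P : Program α) (M : Set α) : Prop :=
  ∃ lam : α → Ordinal.{u}, ∀ r ∈ P.app M, ∀ x ∈ M ∩ r.hset,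
    ∀ a ∈ M ∩ (⋃ A ∈ r.pos, A.dom), lam a < lam x


section Aux

variable {α : Type u}

lemma Constraint.Sat.mono_up {A : Constraint α} (hA : A.Mono) {X Y : Set α}
    (h : Constraint.Sat X A) (hXY : X ⊆ Y) : Constraint.Sat Y A :=
  hA _ _ h (Set.inter_subset_inter_left _ hXY) Set.inter_subset_right

/-- Hypothesis: `Q` is a Horn program with monotone body constraints. -/
def GoodHorn (Q : Program α) : Prop :=
  ∀ r ∈ Q, r.neg = ∅ ∧ ∀ A ∈ r.pos, A.Mono

lemma app_mono {Q : Program α} (hQ : GoodHorn Q) {X Y : Set α} (hXY : X ⊆ Y) :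
    Q.app X ⊆ Q.app Y := by
  rintro r ⟨hrQ, hpos, _⟩
  refine ⟨hrQ, fun A hA => ((hpos A hA).mono_up ((hQ r hrQ).2 A hA) hXY), ?_⟩
  intro A hA
  rw [(hQ r hrQ).1] at hA
  exact absurd hA (Set.notMem_empty _)

lemma hset_mono {Q₁ Q₂ : Program α} (h : Q₁ ⊆ Q₂) : Q₁.hset ⊆ Q₂.hset := by
  intro x hx
  simp only [Program.hset, Set.mem_iUnion] at hx ⊢
  obtain ⟨r, hr, hx⟩ := hx
  exact ⟨r, h hr, hx⟩

lemma canSeq_zero (Q : Program α) (M : Set α) : canSeq Q M 0 = ∅ :=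
  Ordinal.limitRecOn_zero _ _ _

lemma canSeq_succ (Q : Program α) (M : Set α) (o : Ordinal.{u}) :
    canSeq Q M (o + 1) = (Q.app (canSeq Q M o)).hset ∩ M := by
  rw [canSeq, Ordinal.add_one_eq_succ, Ordinal.limitRecOn_succ]
  rfl

lemma canSeq_limit (Q : Program α) (M : Set α) {o : Ordinal.{u}} (h : Order.IsSuccLimit o) :
    canSeq Q M o = ⋃ β : Ordinal.{u}, ⋃ _ : β < o, canSeq Q M β := by
  rw [canSeq, Ordinal.limitRecOn_limit _ _ _ _ h]
  rfl

lemma canSeq_subset_M (Q : Program α) (M : Set α) (o : Ordinal.{u}) :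
    canSeq Q M o ⊆ M := by
  induction o using Ordinal.limitRecOn with
  | zero => rw [canSeq_zero]; exact Set.empty_subset _
  | add_one o _ => rw [canSeq_succ]; exact Set.inter_subset_right
  | limit o ho ih =>
    rw [canSeq_limit Q M ho]
    exact Set.iUnion_subset fun β => Set.iUnion_subset fun hβ => ih β hβ

lemma canSeq_mono_succ {Q : Program α} (hQ : GoodHorn Q) (M : Set α)
    (o : Ordinal.{u}) : canSeq Q M o ⊆ canSeq Q M (o + 1) := by
  induction o using Ordinal.limitRecOn with
  | zero => rw [canSeq_zero]; exact Set.empty_subset _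
  | add_one o ih =>
    rw [canSeq_succ, canSeq_succ]
    exact Set.inter_subset_inter_left _ (hset_mono (app_mono hQ ih))
  | limit o ho ih =>
    rw [canSeq_limit Q M ho]
    refine Set.iUnion_subset fun β => Set.iUnion_subset fun hβ => ?_
    have h1 : canSeq Q M β ⊆ canSeq Q M o := by
      rw [canSeq_limit Q M ho]
      exact Set.subset_iUnion₂ (s := fun β _ => canSeq Q M β) β hβ
    calc canSeq Q M β ⊆ canSeq Q M (β + 1) := ih β hβ
      _ ⊆ canSeq Q M (o + 1) := by
          rw [canSeq_succ, canSeq_succ]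
          exact Set.inter_subset_inter_left _ (hset_mono (app_mono hQ h1))

lemma canSeq_mono {Q : Program α} (hQ : GoodHorn Q) (M : Set α)
    {o₁ o₂ : Ordinal.{u}} (h : o₁ ≤ o₂) : canSeq Q M o₁ ⊆ canSeq Q M o₂ := by
  induction o₂ using Ordinal.induction with
  | h o₂ ih =>
    rcases eq_or_lt_of_le h with rfl | hlt
    · exact subset_rfl
    rcases Ordinal.zero_or_succ_or_isSuccLimit o₂ with rfl | ⟨q, rfl⟩ | hl
    · exact absurd hlt (not_lt_zero (a := _))
    · have hq : o₁ ≤ q := Order.lt_succ_iff.mp hlt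
      rw [← Ordinal.add_one_eq_succ]
      exact (ih q (by rw [← Ordinal.add_one_eq_succ]; exact Order.lt_succ q) hq).trans
        (canSeq_mono_succ hQ M q)
    · rw [canSeq_limit Q M hl]
      exact Set.subset_iUnion₂ (s := fun β _ => canSeq Q M β) o₁ hlt

lemma canSeq_const {Q : Program α} (hQ : GoodHorn Q) (M : Set α)
    {o : Ordinal.{u}} (hfix : canSeq Q M (o + 1) = canSeq Q M o) :
    ∀ p, o ≤ p → canSeq Q M p = canSeq Q M o := by
  intro p
  induction p using Ordinal.induction with
  | h p ih =>
    intro hop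
    rcases eq_or_lt_of_le hop with rfl | hlt
    · rfl
    rcases Ordinal.zero_or_succ_or_isSuccLimit p with rfl | ⟨q, rfl⟩ | hl
    · exact absurd hlt (not_lt_zero (a := _))
    · have hq : o ≤ q := Order.lt_succ_iff.mp hlt
      have hq' : q < Order.succ q := Order.lt_succ q
      rw [← Ordinal.add_one_eq_succ, canSeq_succ, ih q hq' hq, ← canSeq_succ, hfix]
    · apply subset_antisymm
      · rw [canSeq_limit Q M hl]
        refine Set.iUnion_subset fun β => Set.iUnion_subset fun hβ => ?_
        rcases le_total o β with hob | hbo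
        · rw [ih β hβ hob]
        · exact canSeq_mono hQ M hbo
      · rw [canSeq_limit Q M hl]
        exact Set.subset_iUnion₂ (s := fun β _ => canSeq Q M β) o hlt

lemma exists_fix (Q : Program α) (hQ : GoodHorn Q) (M : Set α) :
    ∃ o : Ordinal.{u}, canSeq Q M (o + 1) = canSeq Q M o := by
  by_contra h
  push_neg at h
  have hstrict : StrictMono (canSeq Q M) := by
    intro o₁ o₂ hlt
    have h1 : canSeq Q M o₁ ⊂ canSeq Q M (o₁ + 1) :=
      (canSeq_mono_succ hQ M o₁).ssubset_of_ne (Ne.symm (h o₁))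
    have h2 : canSeq Q M (o₁ + 1) ⊆ canSeq Q M o₂ :=
      canSeq_mono hQ M (by rwa [Ordinal.add_one_eq_succ, Order.succ_le_iff])
    exact h1.trans_subset h2
  exact not_small_ordinal.{u} (small_of_injective hstrict.injective)

lemma Can_eq_fix (Q : Program α) (hQ : GoodHorn Q) (M : Set α) :
    ∃ o : Ordinal.{u}, Can Q M = canSeq Q M o ∧ canSeq Q M (o + 1) = canSeq Q M o := by
  obtain ⟨o, hfix⟩ := exists_fix Q hQ M
  refine ⟨o, ?_, hfix⟩
  apply subset_antisymm
  · refine Set.iUnion_subset fun p => ?_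
    rcases le_total p o with hpo | hop
    · exact canSeq_mono hQ M hpo
    · rw [canSeq_const hQ M hfix p hop]
  · exact Set.subset_iUnion _ o

end Aux

/-- `(M,M)` and `(Can(P^M,M),M)` are SE-models of `P`, for any model
`M` of a monotone-constraint program `P`. -/
theorem se_models_of_model {α : Type u} (P : Program α) (hMono : P.Mono)
    (M : Set α) (hMod : P.IsModel M) :
    P.SE M M ∧ P.SE (Can (P.reduct M) M) M := by
  set Q : Program α := P.reduct M with hQdef
  have hQ : GoodHorn Q := by
    rintro r' ⟨r, hrP, hneg, rfl⟩
    exact ⟨rfl, fun A hA => (hMono r hrP).2.1 A hA⟩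
  -- a model of the reduct from a model of P, given knowledge of head-sat
  have hQmodel : ∀ N : Set α, N ⊆ M →
      (∀ r' ∈ Q, r'.BodySat N → N ∩ r'.head.dom = M ∩ r'.head.dom) →
      Q.IsModel N := by
    intro N hNM hheads
    rintro r' ⟨r, hrP, hneg, rfl⟩ hbody
    have hposM : ∀ A ∈ r.pos, Constraint.Sat M A := fun A hA =>
      (hbody.1 A hA).mono_up ((hMono r hrP).2.1 A hA) hNM
    have hsatM : Constraint.Sat M r.head := hMod r hrP ⟨hposM, hneg⟩
    show Constraint.Sat N r.pos_part.head
    unfold Constraint.Sat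
    rw [hheads r.pos_part ⟨r, hrP, hneg, rfl⟩ hbody]
    exact hsatM
  constructor
  · refine ⟨subset_rfl, hMod, subset_rfl, ?_, Set.inter_subset_left⟩
    exact hQmodel M subset_rfl fun _ _ _ => rfl
  · obtain ⟨o, hCan, hfix⟩ := Can_eq_fix Q hQ M
    set X : Set α := Can Q M with hXdef
    have hXM : X ⊆ M := by rw [hCan]; exact canSeq_subset_M Q M o
    -- applicable heads are absorbed
    have habs : M ∩ (Q.app X).hset ⊆ X := by
      rw [hCan, Set.inter_comm, ← canSeq_succ, hfix]
    have hheads : ∀ r' ∈ Q, r'.BodySat X → X ∩ r'.head.dom = M ∩ r'.head.dom := by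
      intro r' hr' hbody
      apply subset_antisymm (Set.inter_subset_inter_left _ hXM)
      intro x hx
      have hx' : x ∈ M ∩ (Q.app X).hset := by
        refine ⟨hx.1, ?_⟩
        simp only [Program.hset, Set.mem_iUnion]
        exact ⟨r', ⟨hr', hbody⟩, hx.2⟩
      exact ⟨habs hx', hx.2⟩
    exact ⟨hXM, hMod, hXM, hQmodel X hXM hheads, habs⟩
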